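/- Under the stated setting, the vector w = D V m is a solution of the underdetermined moment system V^t w = m; explicitly, Σ_{i=1}^M w_i p_j(x_i) = m_j for every 1 ≤ j ≤ N. -/
import Mathlib


open MeasureTheory MvPolynomial

/-- `w = D V m` solves the underdetermined moment system `Vᵀ w = m`:
`Σ_i w_i p_j(x_i) = m_j` for every `j`. -/
theorem cheap_rule_moment_matching {d n M N : ℕ} (hMN : N ≤ M)
    (hN : N = Nat.choose (n + d) d)
    (μ lam : Measure (Fin d → ℝ)) [IsFiniteMeasure μ] [IsFiniteMeasure lam]
    (Ω B : Set (Fin d → ℝ))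
    (p : Fin N → MvPolynomial (Fin d) ℝ)
    (hdeg : ∀ j, (p j).totalDegree ≤ n)
    (horth : ∀ h k, ∫ x in B, eval x (p h) * eval x (p k) ∂lam
      = if h = k then 1 else 0)
    (X : Fin M → (Fin d → ℝ)) (u : Fin M → ℝ)
    (hX : ∀ i, X i ∈ B) (hu : ∀ i, 0 < u i)
    (hquad : ∀ q : MvPolynomial (Fin d) ℝ, q.totalDegree ≤ 2 * n →
      ∫ x in B, eval x q ∂lam = ∑ i, u i * eval (X i) q)
    (m : Fin N → ℝ) (hm : ∀ j, m j = ∫ x in Ω, eval x (p j) ∂μ)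
    (w : Fin M → ℝ) (hw : ∀ i, w i = u i * ∑ j, eval (X i) (p j) * m j) :
    ∀ j, ∑ i, w i * eval (X i) (p j) = m j := by
  intro j
  have key : ∀ k, ∑ i, u i * (eval (X i) (p k) * eval (X i) (p j))
      = if k = j then 1 else 0 := by
    intro k
    rw [← horth k j]
    have hq := hquad (p k * p j) (by
      calc (p k * p j).totalDegree ≤ (p k).totalDegree + (p j).totalDegree :=
            totalDegree_mul _ _
        _ ≤ n + n := Nat.add_le_add (hdeg k) (hdeg j)
        _ = 2 * n := (two_mul n).symm)
    simp only [eval_mul] at hq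
    rw [hq]
  calc ∑ i, w i * eval (X i) (p j)
      = ∑ i, ∑ k, m k * (u i * (eval (X i) (p k) * eval (X i) (p j))) := by
        refine Finset.sum_congr rfl fun i _ => ?_
        rw [hw i, Finset.mul_sum, Finset.sum_mul]
        exact Finset.sum_congr rfl fun k _ => by ring
    _ = ∑ k, m k * ∑ i, u i * (eval (X i) (p k) * eval (X i) (p j)) := by
        rw [Finset.sum_comm]
        simp [Finset.mul_sum]
    _ = m j := by
        simp only [key]
        simp
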